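/- Let Ω, ω_a, and ω be three circles such that ω_a and ω are both internally tangent to Ω, at points A' and P respectively, and both tangent to a common line k at points F and E respectively, with ω_a and ω on the same side of k. Let J₊ be the intersection of line k with line A'P. Then J₊ is the external homothety center of ω_a and ω, and the four points P, E, F, A' are concyclic. -/

import Mathlib

open EuclideanGeometry Metric AffineSubspace Real RealInnerProductSpace

noncomputable section

/-- The Euclidean plane. -/
abbrev Pt := EuclideanSpace ℝ (Fin 2)

/-- The line through two points. -/
def lineTh (A B : Pt) : AffineSubspace ℝ Pt := affineSpan ℝ {A, B}

/-- The circle with center `O` and radius `r` is tangent to the line `AB` at the point `E`. -/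
def TangentAt (O : Pt) (r : ℝ) (A B E : Pt) : Prop :=
  E ∈ lineTh A B ∧ dist O E = r ∧ ∀ Q ∈ lineTh A B, r ≤ dist O Q

/-- `I` is the incenter of triangle `ABC`: it lies strictly inside the triangle and is
equidistant from the three side lines. -/
def IsIncenter (I A B C : Pt) : Prop :=
  (lineTh B C).SSameSide I A ∧ (lineTh C A).SSameSide I B ∧ (lineTh A B).SSameSide I C ∧
  infDist I (lineTh B C : Set Pt) = infDist I (lineTh C A : Set Pt) ∧
  infDist I (lineTh C A : Set Pt) = infDist I (lineTh A B : Set Pt)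

/-- `J` is the excenter of triangle `ABC` opposite the vertex `C`. -/
def IsExcenterC (J A B C : Pt) : Prop :=
  (lineTh A B).SOppSide J C ∧ (lineTh C B).SSameSide J A ∧ (lineTh C A).SSameSide J B ∧
  infDist J (lineTh B C : Set Pt) = infDist J (lineTh C A : Set Pt) ∧
  infDist J (lineTh C A : Set Pt) = infDist J (lineTh A B : Set Pt)

lemma key_alg (R ra r o1 o2 e a1 a2 p1 p2 j t : ℝ)
    (hra : 0 < ra) (hr : 0 < r) (hRra : ra ≤ R)
    (h1x : R * (0 - o1) = (R - ra) * (a1 - o1))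
    (h1y : R * (ra - o2) = (R - ra) * (a2 - o2))
    (h2x : R * (e - o1) = (R - r) * (p1 - o1))
    (h2y : R * (r - o2) = (R - r) * (p2 - o2))
    (h5 : (a1 - o1)^2 + (a2 - o2)^2 = R^2)
    (h6 : (p1 - o1)^2 + (p2 - o2)^2 = R^2)
    (h7 : 0 - a2 = t * (a2 - p2))
    (h8 : j - a1 = t * (a1 - p1))
    (hAP : ¬(a1 = p1 ∧ a2 = p2)) :
    ra * (e - j) = r * (0 - j) ∧
    ∃ c1 c2 : ℝ, (e - c1)^2 + (0 - c2)^2 = c1^2 + c2^2 ∧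
          (a1 - c1)^2 + (a2 - c2)^2 = c1^2 + c2^2 ∧
          (p1 - c1)^2 + (p2 - c2)^2 = c1^2 + c2^2 := by
  have hR : 0 < R := lt_of_lt_of_le hra hRra
  have hRne : (R:ℝ) ≠ 0 := ne_of_gt hR
  have hrane : (ra:ℝ) ≠ 0 := ne_of_gt hra
  have hrne : (r:ℝ) ≠ 0 := ne_of_gt hr
  have d1 : R * a1 = ra * (a1 - o1) := by linear_combination -h1x
  have d2 : R * (a2 - ra) = ra * (a2 - o2) := by linear_combination -h1y
  have d3 : R * (p1 - e) = r * (p1 - o1) := by linear_combination -h2x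
  have d4 : R * (p2 - r) = r * (p2 - o2) := by linear_combination -h2y
  have e1 : a1^2 + (a2 - ra)^2 = ra^2 := by
    have e1sq : R^2 * (a1^2 + (a2 - ra)^2) = R^2 * ra^2 := by
      linear_combination (R*a1 + ra*(a1-o1)) * d1 + (R*(a2-ra) + ra*(a2-o2)) * d2 + ra^2 * h5
    exact mul_left_cancel₀ (pow_ne_zero 2 hRne) e1sq
  have e2 : (p1 - e)^2 + (p2 - r)^2 = r^2 := by
    have e2sq : R^2 * ((p1 - e)^2 + (p2 - r)^2) = R^2 * r^2 := by
      linear_combination (R*(p1-e) + r*(p1-o1)) * d3 + (R*(p2-r) + r*(p2-o2)) * d4 + r^2 * h6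
    exact mul_left_cancel₀ (pow_ne_zero 2 hRne) e2sq
  have khor : ra * r * e = ra * (R - r) * (p1 - e) - r * (R - ra) * a1 := by
    linear_combination r * d1 - ra * d3
  have kver : (R - ra) * r * a2 = (R - r) * ra * p2 := by
    linear_combination r * d2 - ra * d4
  by_cases hap2 : a2 = p2
  · exfalso
    have ha2 : a2 = 0 := by
      have h := h7
      rw [hap2, sub_self, mul_zero] at h
      linarith
    have hp2 : p2 = 0 := by rw [← hap2]; exact ha2
    have ha1 : a1 = 0 := by
      have hsq : a1^2 = 0 := by rw [ha2] at e1; linear_combination e1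
      exact pow_eq_zero_iff (by norm_num : (2:ℕ) ≠ 0) |>.mp hsq
    have hp1e : p1 = e := by
      have hsq : (p1 - e)^2 = 0 := by rw [hp2] at e2; linear_combination e2
      have h0 := pow_eq_zero_iff (by norm_num : (2:ℕ) ≠ 0) |>.mp hsq
      linarith [sub_eq_zero.mp h0]
    have he : e = 0 := by
      have h0 : ra * r * e = 0 := by rw [khor, ha1, hp1e]; ring
      have h1 := mul_left_cancel₀ (mul_ne_zero hrane hrne) (by linarith [h0] : ra * r * e = ra * r * 0)
      linarith
    exact hAP ⟨by rw [ha1, hp1e, he], by rw [ha2, hp2]⟩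
  · have hap2' : a2 - p2 ≠ 0 := sub_ne_zero_of_ne hap2
    have hj : j * (a2 - p2) = a2 * p1 - a1 * p2 := by
      linear_combination (a2 - p2) * h8 - (a1 - p1) * h7
    have gsc : (ra * r) * (ra * e * (a2 - p2)) = (ra * r) * ((ra - r) * (a2 * p1 - a1 * p2)) := by
      linear_combination (r*a2 - ra*p2) * khor + (ra*(p1-e) - r*a1) * kver
    have gident : ra * e * (a2 - p2) = (ra - r) * (a2 * p1 - a1 * p2) :=
      mul_left_cancel₀ (mul_ne_zero hrane hrne) gsc
    have hG1 : ra * (e - j) = r * (0 - j) := by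
      have hG : (ra * e) * (a2 - p2) = ((ra - r) * j) * (a2 - p2) := by
        rw [show ((ra - r) * j) * (a2 - p2) = (ra - r) * (j * (a2 - p2)) by ring, hj]
        linear_combination gident
      have h' := mul_right_cancel₀ hap2' hG
      linarith [h']
    refine ⟨hG1, ?_⟩
    have dsc : (ra * r) * (p2 * (a1^2 + a2^2 - e*a1)) = (ra * r) * (a2 * (p1^2 + p2^2 - e*p1)) := by
      linear_combination (-(a2*p2 - a1*(p1-e))) * kver - ((p1-e)*a2 + a1*p2) * khor
        + (r*(R-ra)*p2 + ra*r*p2) * e1 - (ra*(R-r)*a2 + ra*r*a2) * e2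
    have dia : p2 * (a1^2 + a2^2 - e*a1) = a2 * (p1^2 + p2^2 - e*p1) :=
      mul_left_cancel₀ (mul_ne_zero hrane hrne) dsc
    by_cases ha2 : a2 = 0
    · have ha1 : a1 = 0 := by
        have hsq : a1^2 = 0 := by rw [ha2] at e1; linear_combination e1
        exact pow_eq_zero_iff (by norm_num : (2:ℕ) ≠ 0) |>.mp hsq
      have hp2 : p2 ≠ 0 := fun h => hap2' (by rw [ha2, h]; ring)
      set c2 : ℝ := (p1^2+p2^2-e*p1)/(2*p2) with hc2def
      have hc2 : 2*p2*c2 = p1^2+p2^2-e*p1 := by rw [hc2def]; field_simp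
      refine ⟨e/2, c2, by ring, ?_, ?_⟩
      · rw [ha1, ha2]; ring
      · linear_combination -hc2
    · set c2 : ℝ := (a1^2+a2^2-e*a1)/(2*a2) with hc2def
      have hc2 : 2*a2*c2 = a1^2+a2^2-e*a1 := by rw [hc2def]; field_simp
      refine ⟨e/2, c2, by ring, ?_, ?_⟩
      · linear_combination -hc2
      · have hp2' : a2 * ((p1 - e/2)^2 + (p2 - c2)^2) = a2 * ((e/2)^2 + c2^2) := by
          linear_combination -dia - p2 * hc2
        exact mul_left_cancel₀ ha2 hp2'

lemma aux_perp (v : Pt) (L : AffineSubspace ℝ Pt) (hvdir : v ∈ L.direction) (C X : Pt) (ρ : ℝ)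
    (hX : X ∈ L) (hd : dist C X = ρ) (hmin : ∀ Q ∈ L, ρ ≤ dist C Q) :
    ⟪C - X, v⟫ = 0 := by
  by_cases hv : v = 0
  · simp [hv]
  have hρ0 : 0 ≤ ρ := hd ▸ dist_nonneg
  set w : ℝ := ⟪C - X, v⟫ with hw
  set s : ℝ := ‖v‖^2 with hs
  have hspos : 0 < s := by rw [hs]; exact pow_pos (norm_pos_iff.mpr hv) 2
  have key : ∀ t : ℝ, ρ^2 ≤ ρ^2 - 2*t*w + t^2*s := by
    intro t
    have hQ : t • v +ᵥ X ∈ L := vadd_mem_of_mem_direction (Submodule.smul_mem _ t hvdir) hX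
    have h1 := hmin _ hQ
    have hCX : ‖C - X‖ = ρ := by rw [← hd, dist_eq_norm]
    have h2 : dist C (t • v +ᵥ X) ^ 2 = ρ^2 - 2*t*w + t^2*s := by
      rw [dist_eq_norm, vadd_eq_add, show C - (t • v + X) = (C - X) - t • v by abel,
        norm_sub_sq_real, real_inner_smul_right, norm_smul, hCX, Real.norm_eq_abs, mul_pow,
        sq_abs, hw, hs]
      ring
    nlinarith [h1, dist_nonneg (x := C) (y := t • v +ᵥ X)]
  have h2 : 0 ≤ -2*(w/s)*w + (w/s)^2*s := by linarith [key (w/s)]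
  have h3 : (-2*(w/s)*w + (w/s)^2*s)*s = -w^2 := by field_simp; ring
  have h4 : 0 ≤ -w^2 := by
    calc (0:ℝ) = 0 * s := by ring
    _ ≤ (-2*(w/s)*w + (w/s)^2*s)*s := by
        apply mul_le_mul_of_nonneg_right h2 (le_of_lt hspos)
    _ = -w^2 := h3
  have : w^2 = 0 := le_antisymm (by linarith) (sq_nonneg w)
  exact pow_eq_zero_iff (by norm_num : (2:ℕ) ≠ 0) |>.mp this

lemma aux_tangent (O C Pc : Pt) (R ρ : ℝ) (hρ : 0 < ρ)
    (h1 : dist C Pc = ρ) (h2 : dist O Pc = R) (h3 : dist C O = R - ρ) :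
    R • (C - O) = (R - ρ) • (Pc - O) := by
  have hsr : SameRay ℝ (C - O) (Pc - C) := by
    rw [sameRay_iff_norm_add, show C - O + (Pc - C) = Pc - O by abel]
    rw [← dist_eq_norm, ← dist_eq_norm, ← dist_eq_norm, dist_comm Pc O, dist_comm Pc C,
      h1, h2, h3]
    ring
  rcases hsr with h0 | h0 | ⟨r₁, r₂, hr₁, hr₂, heq⟩
  · have hC : C = O := by rwa [sub_eq_zero] at h0
    have hR : R - ρ = 0 := by rw [← h3, hC]; simp
    rw [hC, hR]; simp
  · exfalso
    have : ρ = 0 := by rw [← h1, dist_eq_norm, show C - Pc = -(Pc - C) by abel, h0]; simp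
    linarith
  · have heq2 : (r₁ + r₂) • (C - O) = r₂ • (Pc - O) := by
      have h5 : r₁ • (C - O) + r₂ • (C - O) = r₂ • (Pc - C) + r₂ • (C - O) := by rw [heq]
      rw [← add_smul] at h5
      rw [h5, ← smul_add, show Pc - C + (C - O) = Pc - O by abel]
    have hn : (r₁ + r₂) * (R - ρ) = r₂ * R := by
      have h6 := congrArg norm heq2
      rw [norm_smul, norm_smul, ← dist_eq_norm, ← dist_eq_norm, h3, dist_comm Pc O, h2,
        Real.norm_eq_abs, Real.norm_eq_abs, abs_of_pos (by linarith : (0:ℝ) < r₁ + r₂),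
        abs_of_pos hr₂] at h6
      exact h6
    have hkey : r₂ • (R • (C - O)) = r₂ • ((R - ρ) • (Pc - O)) := by
      rw [smul_smul, smul_smul, ← hn,
        show (r₁ + r₂) * (R - ρ) = (R - ρ) * (r₁ + r₂) by ring, ← smul_smul, heq2,
        smul_smul, show (R - ρ) * r₂ = r₂ * (R - ρ) by ring]
    exact smul_right_injective Pt (ne_of_gt hr₂) hkey

/-- Two circles inscribed in a circular segment-like configuration: `J₊` is the external
homothety center of `ω_a` and `ω`, and `P`, `E`, `F`, `A'` are concyclic. -/
theorem homothety_center_concyclic (O Oa W A' P K₁ K₂ F E J : Pt) (R ra r : ℝ)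
    (hra : 0 < ra) (hr : 0 < r)
    (hK : K₁ ≠ K₂)
    (hA'₁ : dist Oa A' = ra) (hA'₂ : dist O A' = R) (hA'₃ : dist Oa O = R - ra)
    (hP₁ : dist W P = r) (hP₂ : dist O P = R) (hP₃ : dist W O = R - r)
    (hF : TangentAt Oa ra K₁ K₂ F) (hE : TangentAt W r K₁ K₂ E)
    (hside : (lineTh K₁ K₂).SSameSide Oa W)
    (hAP : A' ≠ P)
    (hJ₁ : J ∈ lineTh K₁ K₂) (hJ₂ : J ∈ lineTh A' P) :
    W - J = (r / ra) • (Oa - J) ∧ Concyclic ({P, E, F, A'} : Set Pt) := by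
  obtain ⟨hF1, hF2, hF3⟩ := hF
  obtain ⟨hE1, hE2, hE3⟩ := hE
  have hrane : ra ≠ 0 := ne_of_gt hra
  have hrne : r ≠ 0 := ne_of_gt hr
  have hRra : ra ≤ R := by
    have : (0:ℝ) ≤ R - ra := hA'₃ ▸ dist_nonneg
    linarith
  set v : Pt := K₁ - K₂ with hvdef
  have hvne : v ≠ 0 := sub_ne_zero.mpr hK
  have hdirL : (lineTh K₁ K₂).direction = Submodule.span ℝ {v} := by
    rw [lineTh, direction_affineSpan, vectorSpan_pair]
    rfl
  have hvdir : v ∈ (lineTh K₁ K₂).direction := by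
    rw [hdirL]; exact Submodule.mem_span_singleton_self v
  have hperpOa : ⟪Oa - F, v⟫ = 0 := aux_perp v _ hvdir Oa F ra hF1 hF2 hF3
  have hperpW : ⟪W - E, v⟫ = 0 := aux_perp v _ hvdir W E r hE1 hE2 hE3
  have hOaFn : ‖Oa - F‖ = ra := by rw [← dist_eq_norm, hF2]
  have hWEn : ‖W - E‖ = r := by rw [← dist_eq_norm, hE2]
  have hOaFne : Oa - F ≠ 0 := by
    intro h; rw [h, norm_zero] at hOaFn; exact hrane hOaFn.symm
  -- span {Oa - F} is the orthogonal complement of span {v}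
  have hspan : Submodule.span ℝ {Oa - F} = (Submodule.span ℝ {v})ᗮ := by
    have hle : Submodule.span ℝ {Oa - F} ≤ (Submodule.span ℝ {v})ᗮ := by
      rw [Submodule.span_le, Set.singleton_subset_iff]
      exact Submodule.mem_orthogonal_singleton_iff_inner_left.mpr hperpOa
    apply Submodule.eq_of_le_of_finrank_le hle
    have htot := Submodule.finrank_add_finrank_orthogonal (𝕜 := ℝ) (Submodule.span ℝ {v})
    rw [finrank_span_singleton hvne, finrank_euclideanSpace] at htot
    simp only [Fintype.card_fin] at htot
    rw [finrank_span_singleton hOaFne]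
    omega
  -- W - E is a positive multiple of Oa - F
  obtain ⟨c, hc⟩ : ∃ c : ℝ, c • (Oa - F) = W - E := by
    rw [← Submodule.mem_span_singleton, hspan]
    exact Submodule.mem_orthogonal_singleton_iff_inner_left.mpr hperpW
  have hinnerL : ∀ X Y : Pt, X ∈ lineTh K₁ K₂ → Y ∈ lineTh K₁ K₂ → ⟪X - Y, Oa - F⟫ = 0 := by
    intro X Y hX hY
    have : X - Y ∈ (lineTh K₁ K₂).direction := vsub_mem_direction hX hY
    rw [hdirL, Submodule.mem_span_singleton] at this
    obtain ⟨a, ha⟩ := this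
    rw [← ha, real_inner_smul_left, real_inner_comm, hperpOa, mul_zero]
  have hcpos : 0 < c := by
    obtain ⟨⟨p₁, hp₁, p₂, hp₂, hray⟩, hOaL, hWL⟩ := hside
    have hi1 : ⟪Oa - p₁, Oa - F⟫ = ra^2 := by
      rw [show Oa - p₁ = (Oa - F) + (F - p₁) by abel, inner_add_left,
        real_inner_self_eq_norm_sq, hOaFn, hinnerL F p₁ hF1 hp₁, add_zero]
    have hi2 : ⟪W - p₂, Oa - F⟫ = c * ra^2 := by
      rw [show W - p₂ = (W - E) + (E - p₂) by abel, inner_add_left,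
        hinnerL E p₂ hE1 hp₂, add_zero, ← hc, real_inner_smul_left,
        real_inner_self_eq_norm_sq, hOaFn]
    rcases hray with h0 | h0 | ⟨r₁, r₂, hr₁, hr₂, heq⟩
    · exfalso
      rw [vsub_eq_sub] at h0
      rw [h0, inner_zero_left] at hi1
      nlinarith
    · exfalso
      have hW : W = p₂ := by rwa [vsub_eq_sub, sub_eq_zero] at h0
      have := hE3 W (hW ▸ hp₂)
      simp at this
      linarith
    · rw [vsub_eq_sub, vsub_eq_sub] at heq
      have h7 := congrArg (fun z => ⟪z, Oa - F⟫) heq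
      simp only [real_inner_smul_left] at h7
      rw [hi1, hi2] at h7
      have hra2 : (0:ℝ) < ra^2 := by positivity
      have : r₁ = r₂ * c := by
        have := mul_right_cancel₀ (ne_of_gt hra2) (by linarith [h7] : r₁ * ra^2 = (r₂ * c) * ra^2)
        exact this
      nlinarith
  have hcval : c = r / ra := by
    have := congrArg norm hc
    rw [norm_smul, hOaFn, hWEn, Real.norm_eq_abs, abs_of_pos hcpos] at this
    rw [eq_div_iff hrane]
    exact this
  have hWEeq : W - E = r • ((ra:ℝ)⁻¹ • (Oa - F)) := by
    rw [← hc, hcval, div_eq_mul_inv, smul_smul]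
  -- orthonormal frame
  set u : Pt := (ra:ℝ)⁻¹ • (Oa - F) with hudef
  set d : Pt := ‖v‖⁻¹ • v with hddef
  have hOaFu : Oa - F = ra • u := by
    rw [hudef, smul_smul, mul_inv_cancel₀ hrane, one_smul]
  have hun : ‖u‖ = 1 := by
    rw [hudef, norm_smul, hOaFn, Real.norm_eq_abs, abs_inv, abs_of_pos hra,
      inv_mul_cancel₀ hrane]
  have hdn : ‖d‖ = 1 := by
    rw [hddef, norm_smul, Real.norm_eq_abs, abs_inv, abs_norm,
      inv_mul_cancel₀ (norm_ne_zero_iff.mpr hvne)]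
  have hud : ⟪u, d⟫ = 0 := by
    rw [hudef, hddef, real_inner_smul_left, real_inner_smul_right, hperpOa]
    ring
  have hdu : ⟪d, u⟫ = 0 := by rw [real_inner_comm]; exact hud
  have huu : ⟪u, u⟫ = 1 := by rw [real_inner_self_eq_norm_sq, hun]; norm_num
  have hdd : ⟪d, d⟫ = 1 := by rw [real_inner_self_eq_norm_sq, hdn]; norm_num
  -- decomposition
  have hdecomp : ∀ w : Pt, w = ⟪w, d⟫ • d + ⟪w, u⟫ • u := by
    intro w
    set w' : Pt := w - ⟪w, d⟫ • d - ⟪w, u⟫ • u with hw'def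
    have hw'd : ⟪w', d⟫ = 0 := by
      simp only [hw'def, inner_sub_left, real_inner_smul_left, hdd, hud]
      ring
    have hw'u : ⟪w', u⟫ = 0 := by
      simp only [hw'def, inner_sub_left, real_inner_smul_left, hdu, huu]
      ring
    have hw'v : ⟪w', v⟫ = 0 := by
      have hvd : v = ‖v‖ • d := by
        rw [hddef, smul_smul, mul_inv_cancel₀ (norm_ne_zero_iff.mpr hvne), one_smul]
      rw [hvd, real_inner_smul_right, hw'd, mul_zero]
    have : w' ∈ Submodule.span ℝ {Oa - F} := by
      rw [hspan]
      exact Submodule.mem_orthogonal_singleton_iff_inner_left.mpr hw'v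
    rw [Submodule.mem_span_singleton] at this
    obtain ⟨a, ha⟩ := this
    have : a = 0 := by
      have h8 : ⟪w', u⟫ = a * ra := by
        rw [← ha, hOaFu, smul_smul, real_inner_smul_left, huu]
        ring
      rw [hw'u] at h8
      have : a * ra = 0 := h8.symm
      rcases mul_eq_zero.mp this with h | h
      · exact h
      · exact absurd h hrane
    have hw'0 : w' = 0 := by rw [← ha, this, zero_smul]
    have h9 : w - (⟪w,d⟫ • d + ⟪w,u⟫ • u) = 0 := by
      rw [← hw'0, hw'def]; abel
    exact (sub_eq_zero.mp h9)
  clear_value u d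
  -- splitting inner products through F
  have hsplitd : ∀ X Y : Pt, ⟪X - Y, d⟫ = ⟪X - F, d⟫ - ⟪Y - F, d⟫ := by
    intro X Y
    rw [show X - Y = (X - F) - (Y - F) by abel, inner_sub_left]
  have hsplitu : ∀ X Y : Pt, ⟪X - Y, u⟫ = ⟪X - F, u⟫ - ⟪Y - F, u⟫ := by
    intro X Y
    rw [show X - Y = (X - F) - (Y - F) by abel, inner_sub_left]
  have hnormsq : ∀ wv : Pt, ‖wv‖^2 = ⟪wv, d⟫^2 + ⟪wv, u⟫^2 := by
    intro wv
    conv_lhs => rw [hdecomp wv]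
    rw [norm_add_sq_real, norm_smul, norm_smul, real_inner_smul_left, real_inner_smul_right,
      hdu, Real.norm_eq_abs, Real.norm_eq_abs, hdn, hun]
    rw [mul_one, mul_one, sq_abs, sq_abs]
    ring
  have hdistsq : ∀ X Y : Pt,
      dist X Y ^ 2 = (⟪X - F, d⟫ - ⟪Y - F, d⟫)^2 + (⟪X - F, u⟫ - ⟪Y - F, u⟫)^2 := by
    intro X Y
    rw [dist_eq_norm, hnormsq, hsplitd, hsplitu]
  have hext : ∀ X Y : Pt, ⟪X - F, d⟫ = ⟪Y - F, d⟫ → ⟪X - F, u⟫ = ⟪Y - F, u⟫ → X = Y := by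
    intro X Y h1 h2
    have h3 : X - Y = 0 := by
      rw [hdecomp (X - Y), hsplitd, hsplitu, h1, h2]
      simp
    exact sub_eq_zero.mp h3
  -- coordinates of special points
  have hxOa : ⟪Oa - F, d⟫ = 0 := by rw [hOaFu, real_inner_smul_left, hud, mul_zero]
  have hyOa : ⟪Oa - F, u⟫ = ra := by rw [hOaFu, real_inner_smul_left, huu, mul_one]
  have hlineY : ∀ X, X ∈ lineTh K₁ K₂ → ⟪X - F, u⟫ = 0 := by
    intro X hX
    have h0 := hinnerL X F hX hF1
    rw [hOaFu, real_inner_smul_right] at h0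
    rcases mul_eq_zero.mp h0 with h | h
    · exact absurd h hrane
    · exact h
  have hyE : ⟪E - F, u⟫ = 0 := hlineY E hE1
  have hyJ : ⟪J - F, u⟫ = 0 := hlineY J hJ₁
  have hyF : ⟪F - F, u⟫ = 0 := by simp
  have hxF : ⟪F - F, d⟫ = 0 := by simp
  have hWFsplit : W - F = (W - E) + (E - F) := by abel
  have hxW : ⟪W - F, d⟫ = ⟪E - F, d⟫ := by
    rw [hWFsplit, inner_add_left, hWEeq, real_inner_smul_left, hud, mul_zero, zero_add]
  have hyW : ⟪W - F, u⟫ = r := by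
    rw [hWFsplit, inner_add_left, hWEeq, real_inner_smul_left, huu, hyE]
    ring
  -- internal tangency collinearity
  have hL1 := aux_tangent O Oa A' R ra hra hA'₁ hA'₂ hA'₃
  have hL2 := aux_tangent O W P R r hr hP₁ hP₂ hP₃
  have h1x : R * (0 - ⟪O - F, d⟫) = (R - ra) * (⟪A' - F, d⟫ - ⟪O - F, d⟫) := by
    have hLd := congrArg (fun z : Pt => ⟪z, d⟫) hL1
    simp only [real_inner_smul_left] at hLd
    rw [hsplitd Oa O, hsplitd A' O, hxOa] at hLd
    exact hLd
  have h1y : R * (ra - ⟪O - F, u⟫) = (R - ra) * (⟪A' - F, u⟫ - ⟪O - F, u⟫) := by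
    have hLd := congrArg (fun z : Pt => ⟪z, u⟫) hL1
    simp only [real_inner_smul_left] at hLd
    rw [hsplitu Oa O, hsplitu A' O, hyOa] at hLd
    exact hLd
  have h2x : R * (⟪E - F, d⟫ - ⟪O - F, d⟫) = (R - r) * (⟪P - F, d⟫ - ⟪O - F, d⟫) := by
    have hLd := congrArg (fun z : Pt => ⟪z, d⟫) hL2
    simp only [real_inner_smul_left] at hLd
    rw [hsplitd W O, hsplitd P O, hxW] at hLd
    exact hLd
  have h2y : R * (r - ⟪O - F, u⟫) = (R - r) * (⟪P - F, u⟫ - ⟪O - F, u⟫) := by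
    have hLd := congrArg (fun z : Pt => ⟪z, u⟫) hL2
    simp only [real_inner_smul_left] at hLd
    rw [hsplitu W O, hsplitu P O, hyW] at hLd
    exact hLd
  have h5 : (⟪A' - F, d⟫ - ⟪O - F, d⟫)^2 + (⟪A' - F, u⟫ - ⟪O - F, u⟫)^2 = R^2 := by
    rw [← hdistsq A' O, dist_comm A' O, hA'₂]
  have h6 : (⟪P - F, d⟫ - ⟪O - F, d⟫)^2 + (⟪P - F, u⟫ - ⟪O - F, u⟫)^2 = R^2 := by
    rw [← hdistsq P O, dist_comm P O, hP₂]
  -- J on line A'P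
  have hAmem : A' ∈ lineTh A' P := mem_affineSpan ℝ (by simp)
  obtain ⟨t, ht⟩ : ∃ t : ℝ, J - A' = t • (A' - P) := by
    have hd0 := vsub_mem_direction hJ₂ hAmem
    rw [lineTh, direction_affineSpan, vectorSpan_pair] at hd0
    rw [Submodule.mem_span_singleton] at hd0
    obtain ⟨t, ht⟩ := hd0
    exact ⟨t, ht.symm⟩
  have h7 : 0 - ⟪A' - F, u⟫ = t * (⟪A' - F, u⟫ - ⟪P - F, u⟫) := by
    have hLd := congrArg (fun z : Pt => ⟪z, u⟫) ht
    simp only [real_inner_smul_left] at hLd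
    rw [hsplitu J A', hsplitu A' P, hyJ] at hLd
    exact hLd
  have h8 : ⟪J - F, d⟫ - ⟪A' - F, d⟫ = t * (⟪A' - F, d⟫ - ⟪P - F, d⟫) := by
    have hLd := congrArg (fun z : Pt => ⟪z, d⟫) ht
    simp only [real_inner_smul_left] at hLd
    rw [hsplitd J A', hsplitd A' P] at hLd
    exact hLd
  have hAPc : ¬(⟪A' - F, d⟫ = ⟪P - F, d⟫ ∧ ⟪A' - F, u⟫ = ⟪P - F, u⟫) :=
    fun ⟨u1, u2⟩ => hAP (hext A' P u1 u2)
  obtain ⟨C1, c1, c2, hEq, hAq, hPq⟩ :=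
    key_alg R ra r (⟪O - F, d⟫) (⟪O - F, u⟫) (⟪E - F, d⟫) (⟪A' - F, d⟫) (⟪A' - F, u⟫)
      (⟪P - F, d⟫) (⟪P - F, u⟫) (⟪J - F, d⟫) t hra hr hRra h1x h1y h2x h2y h5 h6 h7 h8 hAPc
  constructor
  · -- homothety statement
    have hxx : ⟪W - J, d⟫ = ⟪(r/ra) • (Oa - J), d⟫ := by
      rw [real_inner_smul_left, hsplitd W J, hsplitd Oa J, hxOa, hxW]
      rw [div_mul_eq_mul_div, eq_div_iff hrane]
      linarith [C1]
    have hyy : ⟪W - J, u⟫ = ⟪(r/ra) • (Oa - J), u⟫ := by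
      rw [real_inner_smul_left, hsplitu W J, hsplitu Oa J, hyOa, hyW, hyJ]
      field_simp
      ring
    rw [hdecomp (W - J), hdecomp ((r/ra) • (Oa - J)), hxx, hyy]
  · refine ⟨⟨F + (c1 • d + c2 • u), Real.sqrt (c1^2 + c2^2), ?_⟩,
      coplanar_of_finrank_eq_two _ (by rw [finrank_euclideanSpace]; simp)⟩
    have hxG : ⟪F + (c1 • d + c2 • u) - F, d⟫ = c1 := by
      rw [show F + (c1 • d + c2 • u) - F = c1 • d + c2 • u by abel, inner_add_left,
        real_inner_smul_left, real_inner_smul_left, hdd, hud]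
      ring
    have hyG : ⟪F + (c1 • d + c2 • u) - F, u⟫ = c2 := by
      rw [show F + (c1 • d + c2 • u) - F = c1 • d + c2 • u by abel, inner_add_left,
        real_inner_smul_left, real_inner_smul_left, hdu, huu]
      ring
    have hrad : ∀ X : Pt, (⟪X - F, d⟫ - c1)^2 + (⟪X - F, u⟫ - c2)^2 = c1^2 + c2^2 →
        dist X (F + (c1 • d + c2 • u)) = Real.sqrt (c1^2 + c2^2) := by
      intro X hX
      have h1 : dist X (F + (c1 • d + c2 • u)) ^ 2 = c1^2 + c2^2 := by
        rw [hdistsq, hxG, hyG, hX]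
      rw [← Real.sqrt_sq (dist_nonneg (x := X) (y := F + (c1 • d + c2 • u))), h1]
    intro p hp
    simp only [Set.mem_insert_iff, Set.mem_singleton_iff] at hp
    rcases hp with rfl | rfl | rfl | rfl
    · exact hrad p (by linear_combination hPq)
    · exact hrad p (by rw [hyE]; linear_combination hEq)
    · exact hrad p (by rw [hxF, hyF]; ring)
    · exact hrad p (by linear_combination hAq)
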